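/- Let K be a Noetherian ring and V ≤ Λ_K(G)^n a Λ_K(G)-submodule. If u_1,…,u_k ∈ V_{≥0} are such that their images ũ_1,…,ũ_k span the K-module Ṽ = V_{≥0}/V_{+}, then u_1,…,u_k span V_{≥0} over Λ_K(G)_{≥0}. -/

import Mathlib

set_option synthInstance.maxHeartbeats 1000000
set_option maxHeartbeats 1000000
open Classical
noncomputable section

variable {K : Type*} [CommRing K]

def InNov (G : AddSubgroup ℝ) (x : HahnSeries ℝ K) : Prop :=
  x.support ⊆ G ∧ ∀ C : ℝ, {g ∈ x.support | g < C}.Finite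

/-- A Novikov support set is bounded below. -/
lemma InNov.bddBelow {G : AddSubgroup ℝ} {x : HahnSeries ℝ K} (h : InNov G x) :
    BddBelow x.support := by
  rcases x.support.eq_empty_or_nonempty with he | ⟨a, ha⟩
  · simp [he]
  · have hmem : ∀ g ∈ x.support, g < a + 1 → g ∈ (h.2 (a+1)).toFinset := fun g hg hlt =>
      (Set.Finite.mem_toFinset _).2 ⟨hg, hlt⟩
    refine ⟨((h.2 (a+1)).toFinset.min' ⟨a, hmem a ha (by linarith)⟩ : ℝ), ?_⟩
    intro g hg
    by_cases hga : g < a + 1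
    · exact Finset.min'_le _ _ (hmem g hg hga)
    · have := Finset.min'_le (h.2 (a+1)).toFinset a (hmem a ha (by linarith))
      push_neg at hga; linarith

def NovikovSubring (K : Type*) [CommRing K] (G : AddSubgroup ℝ) :
    Subring (HahnSeries ℝ K) where
  carrier := {x | InNov G x}
  zero_mem' := by
    constructor <;> simp [HahnSeries.support_zero]
  one_mem' := by
    have hsub : (1 : HahnSeries ℝ K).support ⊆ {0} := by
      rw [← HahnSeries.single_zero_one]; exact HahnSeries.support_single_subset
    constructor
    · exact fun g hg => by rw [Set.mem_singleton_iff.1 (hsub hg)]; exact G.zero_mem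
    · intro C
      apply Set.Finite.subset (Set.finite_singleton (0:ℝ))
      rintro g ⟨hg, -⟩
      exact hsub hg
  add_mem' := by
    rintro x y ⟨hx1, hx2⟩ ⟨hy1, hy2⟩
    constructor
    · exact fun g hg => by
        rcases (HahnSeries.support_add_subset _ _ hg) with h | h
        exacts [hx1 h, hy1 h]
    · intro C
      apply Set.Finite.subset ((hx2 C).union (hy2 C))
      rintro g ⟨hg, hgC⟩
      rcases HahnSeries.support_add_subset _ _ hg with h | h
      · exact Or.inl ⟨h, hgC⟩
      · exact Or.inr ⟨h, hgC⟩
  neg_mem' := by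
    rintro x ⟨hx1, hx2⟩
    constructor
    · simpa [HahnSeries.support_neg] using hx1
    · simpa [HahnSeries.support_neg] using hx2
  mul_mem' := by
    rintro x y ⟨hx1, hx2⟩ ⟨hy1, hy2⟩
    rcases (InNov.bddBelow ⟨hx1, hx2⟩) with ⟨mx, hmx⟩
    rcases (InNov.bddBelow ⟨hy1, hy2⟩) with ⟨my, hmy⟩
    constructor
    · intro g hg
      obtain ⟨i, hi, j, hj, rfl⟩ := HahnSeries.support_mul_subset hg
      exact G.add_mem (hx1 hi) (hy1 hj)
    · intro C
      apply Set.Finite.subset (((hx2 (C - my)).image2 (· + ·) (hy2 (C - mx))))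
      rintro g ⟨hg, hgC⟩
      obtain ⟨i, hi, j, hj, rfl⟩ := HahnSeries.support_mul_subset hg
      have hgC' : i + j < C := hgC
      exact Set.mem_image2.2 ⟨i, ⟨hi, by have := hmy hj; linarith [hgC']⟩,
        j, ⟨hj, by have := hmx hi; linarith [hgC']⟩, rfl⟩

/-- ν, the minimal-exponent valuation on Hahn series, with ν(0) = ∞. -/
def nuH (x : HahnSeries ℝ K) : EReal := if x = 0 then ⊤ else (x.order : EReal)

/-- ν̄ on vectors of Hahn series: the minimum of ν over the coordinates. -/
def nubarH {n : ℕ} (v : Fin n → HahnSeries ℝ K) : EReal := ⨅ i, nuH (v i)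

variable {G : AddSubgroup ℝ}

/-- ν on the Novikov ring. -/
def nuS (x : NovikovSubring K G) : EReal := nuH (x : HahnSeries ℝ K)

/-- ν̄ on vectors over the Novikov ring. -/
def nubarS {n : ℕ} (v : Fin n → NovikovSubring K G) : EReal :=
  nubarH fun i => (v i : HahnSeries ℝ K)


/-- Sets of reals with finite initial segments are well-founded. -/
lemma isWF_of_finite_initial {S : Set ℝ} (h : ∀ C : ℝ, (S ∩ Set.Iio C).Finite) :
    S.IsWF := by
  rw [Set.isWF_iff_no_descending_seq]
  intro f hf hmem
  have hfin : (S ∩ Set.Iio (f 0 + 1)).Infinite := by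
    apply Set.infinite_of_injective_forall_mem (f := fun n : ℕ => f n) hf.injective
    intro n
    exact ⟨hmem n, lt_of_le_of_lt (hf.antitone (by exact_mod_cast Nat.zero_le n)) (lt_add_one _)⟩
  exact hfin (h _)

/-- The additive closure of a nonnegative set of reals with finite initial segments
again has finite initial segments. -/
lemma finite_initial_closure {W : Set ℝ} (hW0 : W ⊆ Set.Ici 0)
    (hfin : ∀ C : ℝ, (W ∩ Set.Iio C).Finite) (C : ℝ) :
    ((AddSubmonoid.closure W : Set ℝ) ∩ Set.Iio C).Finite := by
  have hE0 : (AddSubmonoid.closure W : Set ℝ) ⊆ Set.Ici 0 := by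
    intro x hx
    have : AddSubmonoid.closure W ≤ AddSubmonoid.nonneg ℝ :=
      AddSubmonoid.closure_le.2 hW0
    exact this hx
  -- choose ε > 0 below all positive elements of W
  obtain ⟨ε, hε0, hε1, hεlb⟩ : ∃ ε : ℝ, 0 < ε ∧ ε ≤ 1 ∧ ∀ w ∈ W, 0 < w → ε ≤ w := by
    by_cases h : (W ∩ Set.Ioo 0 1).Nonempty
    · have hfin' : (W ∩ Set.Ioo 0 1).Finite :=
        (hfin 1).subset (fun x ⟨hx, hx2⟩ => ⟨hx, hx2.2⟩)
      have hFne : hfin'.toFinset.Nonempty := by simpa using h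
      have hmm := hfin'.toFinset.min'_mem hFne
      rw [Set.Finite.mem_toFinset] at hmm
      refine ⟨hfin'.toFinset.min' hFne, hmm.2.1, hmm.2.2.le, ?_⟩
      · intro w hw hw0
        by_cases hw1 : w < 1
        · exact hfin'.toFinset.min'_le w (by rw [Set.Finite.mem_toFinset]; exact ⟨hw, hw0, hw1⟩)
        · push_neg at hw1
          linarith [hmm.2.2]
    · refine ⟨1, one_pos, le_refl _, fun w hw hw0 => ?_⟩
      by_contra hlt
      push_neg at hlt
      exact h ⟨w, hw, hw0, hlt⟩
  -- decomposition of nonzero elements of the closure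
  have hdec : ∀ x ∈ AddSubmonoid.closure W,
      x = 0 ∨ ∃ w ∈ W, 0 < w ∧ x - w ∈ AddSubmonoid.closure W := by
    intro x hx
    induction hx using AddSubmonoid.closure_induction with
    | mem z hz =>
      rcases eq_or_ne z 0 with rfl | hz0
      · exact Or.inl rfl
      · refine Or.inr ⟨z, hz, lt_of_le_of_ne (hW0 hz) (Ne.symm hz0), by
          simpa using AddSubmonoid.zero_mem _⟩
    | zero => exact Or.inl rfl
    | add a b ha hb iha ihb =>
      rcases iha with rfl | ⟨w, hw, hw0, hmem⟩
      · rcases ihb with rfl | ⟨w, hw, hw0, hmem⟩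
        · exact Or.inl (by simp)
        · exact Or.inr ⟨w, hw, hw0, by simpa using hmem⟩
      · exact Or.inr ⟨w, hw, hw0, by
          have : a + b - w = (a - w) + b := by ring
          rw [this]; exact AddSubmonoid.add_mem _ hmem hb⟩
  -- induction on m : closure ∩ Iio (m • ε) finite
  have key : ∀ m : ℕ, ((AddSubmonoid.closure W : Set ℝ) ∩ Set.Iio (m * ε)).Finite := by
    intro m
    induction m with
    | zero =>
      convert Set.finite_empty
      ext x
      simp only [Set.mem_inter_iff, Set.mem_Iio, Set.mem_empty_iff_false, iff_false, not_and]
      intro hx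
      have := hE0 hx
      simp only [Set.mem_Ici] at this
      push_neg
      simpa using this
    | succ m ih =>
      apply Set.Finite.subset (Set.Finite.insert 0
        (Set.Finite.image2 (· + ·) (hfin ((m+1) * ε)) ih))
      rintro x ⟨hx, hxlt⟩
      rcases hdec x hx with rfl | ⟨w, hw, hw0, hmem⟩
      · exact Set.mem_insert _ _
      · right
        have hwε := hεlb w hw hw0
        have hxw0 : 0 ≤ x - w := hE0 hmem
        refine Set.mem_image2.2 ⟨w, ⟨hw, ?_⟩, x - w, ⟨hmem, ?_⟩, by ring⟩
        · simp only [Set.mem_Iio] at hxlt ⊢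
          push_cast at hxlt ⊢
          linarith
        · simp only [Set.mem_Iio] at hxlt ⊢
          push_cast at hxlt ⊢
          linarith
  obtain ⟨m, hm⟩ := exists_nat_gt (C / ε)
  apply (key m).subset
  rintro x ⟨hx, hxlt⟩
  refine ⟨hx, ?_⟩
  simp only [Set.mem_Iio] at hxlt ⊢
  have : C < m * ε := by
    rw [div_lt_iff₀ hε0] at hm
    linarith
  linarith

section Aux

variable {K : Type*} [CommRing K]

lemma coeff_finsetSum {α : Type*} (s : Finset α) (f : α → HahnSeries ℝ K) (g : ℝ) :
    (∑ a ∈ s, f a).coeff g = ∑ a ∈ s, (f a).coeff g := by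
  classical
  induction s using Finset.induction with
  | empty => simp
  | insert a s hx ih => simp [Finset.sum_insert hx, HahnSeries.coeff_add, ih]

lemma le_nuH_iff {x : HahnSeries ℝ K} {c : ℝ} :
    (c : EReal) ≤ nuH x ↔ ∀ g < c, x.coeff g = 0 := by
  unfold nuH
  split_ifs with h
  · simp [h, le_top]
  · rw [EReal.coe_le_coe_iff]
    constructor
    · intro hle g hg
      exact HahnSeries.coeff_eq_zero_of_lt_order (lt_of_lt_of_le hg hle)
    · intro hg
      by_contra hlt
      push_neg at hlt
      exact h (HahnSeries.coeff_order_eq_zero.1 (hg _ hlt))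

lemma lt_nuH_iff {x : HahnSeries ℝ K} {c : ℝ} :
    (c : EReal) < nuH x ↔ ∀ g ≤ c, x.coeff g = 0 := by
  unfold nuH
  split_ifs with h
  · simp [h]
  · rw [EReal.coe_lt_coe_iff]
    constructor
    · intro hle g hg
      exact HahnSeries.coeff_eq_zero_of_lt_order (lt_of_le_of_lt hg hle)
    · intro hg
      by_contra hlt
      push_neg at hlt
      exact h (HahnSeries.coeff_order_eq_zero.1 (hg _ hlt))

lemma le_nubarH_iff {n : ℕ} {v : Fin n → HahnSeries ℝ K} {c : ℝ} :
    (c : EReal) ≤ nubarH v ↔ ∀ i, ∀ g < c, (v i).coeff g = 0 := by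
  unfold nubarH
  rw [le_iInf_iff]
  exact ⟨fun h i => le_nuH_iff.1 (h i), fun h i => le_nuH_iff.2 (h i)⟩

lemma lt_nubarH_iff {n : ℕ} {v : Fin n → HahnSeries ℝ K} {c : ℝ} :
    (c : EReal) < nubarH v ↔ ∀ i, ∀ g ≤ c, (v i).coeff g = 0 := by
  unfold nubarH
  constructor
  · intro h i
    exact lt_nuH_iff.1 (lt_of_lt_of_le h (iInf_le _ i))
  · intro h
    rcases isEmpty_or_nonempty (Fin n) with he | hne
    · rw [iInf_of_empty]
      exact EReal.coe_lt_top c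
    · obtain ⟨i₀, -, hi₀⟩ := Finset.exists_min_image Finset.univ
        (fun i => nuH (v i)) ⟨Classical.arbitrary (Fin n), Finset.mem_univ _⟩
      have : nuH (v i₀) ≤ ⨅ i, nuH (v i) := le_iInf fun i => hi₀ i (Finset.mem_univ i)
      exact lt_of_lt_of_le (lt_nuH_iff.2 (h i₀)) this

lemma single_mul_coeff {c : ℝ} {w : K} {x : HahnSeries ℝ K} {g : ℝ} :
    (HahnSeries.single c w * x).coeff g = w * x.coeff (g - c) := by
  have := HahnSeries.coeff_single_mul_add (r := w) (x := x) (a := g - c) (b := c)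
  simpa using this

lemma mul_coeff_zero_of {x y : HahnSeries ℝ K} {g : ℝ}
    (hx : ∀ a ≤ g, x.coeff a = 0) (hy : ∀ b < 0, y.coeff b = 0) :
    (x * y).coeff g = 0 := by
  rw [HahnSeries.coeff_mul]
  apply Finset.sum_eq_zero
  rintro ⟨a, b⟩ hab
  rw [Finset.mem_addAntidiagonal] at hab
  by_cases ha : a ≤ g
  · rw [hx a ha, zero_mul]
  · have hb : b < 0 := by
      push_neg at ha
      have := hab.2.2
      simp only at this
      linarith
    rw [hy b hb, mul_zero]

lemma single_mem_nov {G : AddSubgroup ℝ} {c : ℝ} (w : K) (hc : c ∈ G) :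
    HahnSeries.single c w ∈ NovikovSubring K G := by
  constructor
  · intro g hg
    rw [Set.mem_singleton_iff.1 (HahnSeries.support_single_subset hg)]
    exact hc
  · intro C
    apply Set.Finite.subset (Set.finite_singleton c)
    rintro g ⟨hg, -⟩
    exact HahnSeries.support_single_subset hg

end Aux
set_option synthInstance.maxHeartbeats 1000000 in
/-- if `u_1,…,u_k ∈ V_{≥0}` have images spanning `Ṽ = V_{≥0}/V_{+}`
over `K`, then they span `V_{≥0}` over `Λ_K(G)_{≥0}`. -/
theorem span_lift {K : Type*} [CommRing K] [IsNoetherianRing K]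
    (G : AddSubgroup ℝ) (n k : ℕ)
    (V : Submodule (NovikovSubring K G) (Fin n → NovikovSubring K G))
    (u : Fin k → (Fin n → NovikovSubring K G))
    (humem : ∀ j, u j ∈ V ∧ 0 ≤ nubarS (u j))
    -- the images `ũ_j` span `Ṽ = V_{≥0}/V_{+}` over `K`:
    (hspan : ∀ v, v ∈ V → 0 ≤ nubarS v → ∃ a : Fin k → K,
      0 < nubarH (fun i => ((v i : HahnSeries ℝ K)
        - ∑ j, a j • (u j i : HahnSeries ℝ K)))) :
    -- conclusion: `u_1,…,u_k` span `V_{≥0}` over `Λ_K(G)_{≥0}`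
    ∀ v, v ∈ V → 0 ≤ nubarS v → ∃ a : Fin k → NovikovSubring K G,
      (∀ j, 0 ≤ nuS (a j)) ∧ v = ∑ j, a j • u j := by
  classical
  intro v hv hv0
  have hu0 : ∀ j i, ∀ g < (0:ℝ), ((u j i : HahnSeries ℝ K)).coeff g = 0 := fun j i =>
    le_nubarH_iff.1 (le_of_eq_of_le (by simp) (humem j).2) i
  have hv0' : ∀ i, ∀ g < (0:ℝ), ((v i : HahnSeries ℝ K)).coeff g = 0 :=
    le_nubarH_iff.1 (le_of_eq_of_le (by simp) hv0)
  -- the set of exponents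
  set W : Set ℝ := (⋃ i, ((v i : HahnSeries ℝ K)).support) ∪
      (⋃ j, ⋃ i, ((u j i : HahnSeries ℝ K)).support) with hWdef
  have hW0 : W ⊆ Set.Ici 0 := by
    rintro g (hg | hg) <;> simp only [Set.mem_iUnion] at hg
    · obtain ⟨i, hi⟩ := hg
      by_contra hneg
      exact hi (hv0' i g (by simpa using hneg))
    · obtain ⟨j, i, hi⟩ := hg
      by_contra hneg
      exact hi (hu0 j i g (by simpa using hneg))
  have hWG : W ⊆ (G : Set ℝ) := by
    rintro g (hg | hg) <;> simp only [Set.mem_iUnion] at hg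
    · obtain ⟨i, hi⟩ := hg
      exact (v i).2.1 hi
    · obtain ⟨j, i, hi⟩ := hg
      exact (u j i).2.1 hi
  have hWfin : ∀ C : ℝ, (W ∩ Set.Iio C).Finite := by
    intro C
    rw [hWdef, Set.union_inter_distrib_right]
    apply Set.Finite.union
    · rw [Set.iUnion_inter]
      exact Set.finite_iUnion fun i => (v i).2.2 C
    · rw [Set.iUnion_inter]
      apply Set.finite_iUnion
      intro j
      rw [Set.iUnion_inter]
      exact Set.finite_iUnion fun i => (u j i).2.2 C
  set E : AddSubmonoid ℝ := AddSubmonoid.closure W with hEdef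
  have hWE : W ⊆ (E : Set ℝ) := AddSubmonoid.subset_closure
  have hE0 : (E : Set ℝ) ⊆ Set.Ici 0 := by
    intro x hx
    exact ((AddSubmonoid.closure_le (S := AddSubmonoid.nonneg ℝ)).2 hW0) hx
  have hEG : (E : Set ℝ) ⊆ (G : Set ℝ) := by
    intro x hx
    exact ((AddSubmonoid.closure_le (S := G.toAddSubmonoid)).2 (by simpa using hWG)) hx
  have hEfin : ∀ C : ℝ, ((E : Set ℝ) ∩ Set.Iio C).Finite :=
    finite_initial_closure hW0 hWfin
  -- the state type: vectors in V with supports in E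
  have hstep : ∀ s : {r : Fin n → NovikovSubring K G //
        r ∈ V ∧ ∀ i, ((r i : HahnSeries ℝ K)).support ⊆ (E : Set ℝ)},
      ∃ cb : ℝ × (Fin k → K) × {r : Fin n → NovikovSubring K G //
        r ∈ V ∧ ∀ i, ((r i : HahnSeries ℝ K)).support ⊆ (E : Set ℝ)},
      cb.1 ∈ E ∧
      (∀ i g, g < cb.1 → ((s.1 i : HahnSeries ℝ K)).coeff g = 0) ∧
      (s.1 = 0 → cb.2.1 = 0) ∧
      (s.1 ≠ 0 → ∃ i, ((s.1 i : HahnSeries ℝ K)).coeff cb.1 ≠ 0) ∧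
      (∀ i, ((cb.2.2.1 i : HahnSeries ℝ K)) = (s.1 i : HahnSeries ℝ K)
          - ∑ j, HahnSeries.single cb.1 (cb.2.1 j) * (u j i : HahnSeries ℝ K)) ∧
      (∀ i g, g ≤ cb.1 → ((cb.2.2.1 i : HahnSeries ℝ K)).coeff g = 0) := by
    rintro ⟨r, hrV, hrE⟩
    by_cases h0 : r = 0
    · refine ⟨⟨0, 0, ⟨r, hrV, hrE⟩⟩, AddSubmonoid.zero_mem E, ?_, fun _ => rfl,
        fun h => absurd h0 h, ?_, ?_⟩
      · intro i g hg
        show ((r i : HahnSeries ℝ K)).coeff g = 0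
        rw [h0]
        simp
      · intro i
        show ((r i : HahnSeries ℝ K)) = (r i : HahnSeries ℝ K)
          - ∑ j, HahnSeries.single 0 ((0 : Fin k → K) j) * (u j i : HahnSeries ℝ K)
        simp [HahnSeries.single_eq_zero]
      · intro i g hg
        show ((r i : HahnSeries ℝ K)).coeff g = 0
        rw [h0]
        simp
    · have hex : ∃ i, r i ≠ 0 := by
        by_contra hc
        push_neg at hc
        exact h0 (funext fun i => hc i)
      have hFine : (Finset.univ.filter (fun i => r i ≠ 0)).Nonempty :=
        ⟨hex.choose, by simp [hex.choose_spec]⟩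
      set c : ℝ := (((Finset.univ.filter (fun i => r i ≠ 0))).image
        (fun i => ((r i : HahnSeries ℝ K)).order)).min' (hFine.image _) with hcdef
      obtain ⟨i₀, hi₀mem, hi₀⟩ : ∃ i ∈ Finset.univ.filter (fun i => r i ≠ 0),
          ((r i : HahnSeries ℝ K)).order = c := by
        have := (((Finset.univ.filter (fun i => r i ≠ 0))).image
          (fun i => ((r i : HahnSeries ℝ K)).order)).min'_mem (hFine.image _)
        rw [Finset.mem_image] at this
        obtain ⟨i, hi, he⟩ := this
        exact ⟨i, hi, he⟩
      have hi₀ne : (r i₀ : HahnSeries ℝ K) ≠ 0 := by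
        have h := (Finset.mem_filter.1 hi₀mem).2
        exact fun hz => h (Subtype.ext hz)
      have hcmem : ((r i₀ : HahnSeries ℝ K)).coeff c ≠ 0 := by
        rw [← hi₀]
        exact fun h' => hi₀ne (HahnSeries.coeff_order_eq_zero.1 h')
      have hcE : c ∈ E := hrE i₀ hcmem
      have hcG : c ∈ G := hEG hcE
      have hlb : ∀ i g, g < c → ((r i : HahnSeries ℝ K)).coeff g = 0 := by
        intro i g hg
        by_cases hri : r i = 0
        · rw [hri]
          simp
        · apply HahnSeries.coeff_eq_zero_of_lt_order
          have hle : c ≤ ((r i : HahnSeries ℝ K)).order :=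
            Finset.min'_le _ _ (Finset.mem_image_of_mem _ (by simp [hri]))
          linarith
      have hnegG : -c ∈ G := G.neg_mem hcG
      set tneg : NovikovSubring K G := ⟨HahnSeries.single (-c) (1:K),
        single_mem_nov 1 hnegG⟩ with htnegdef
      have hwco : ∀ i, ((tneg • r) i : HahnSeries ℝ K)
          = HahnSeries.single (-c) (1:K) * (r i : HahnSeries ℝ K) := fun i => rfl
      have hwV : tneg • r ∈ V := Submodule.smul_mem V tneg hrV
      have hw0 : (0:EReal) ≤ nubarS (tneg • r) := by
        refine le_of_eq_of_le (by simp : (0:EReal) = ((0:ℝ):EReal)) (le_nubarH_iff.2 ?_)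
        intro i g hg
        rw [hwco i, single_mul_coeff, one_mul]
        exact hlb i _ (by linarith)
      obtain ⟨b, hb⟩ := hspan (tneg • r) hwV hw0
      have hb' : ∀ i g, g ≤ (0:ℝ) →
          ((r i : HahnSeries ℝ K)).coeff (g + c)
            = ∑ j, b j * ((u j i : HahnSeries ℝ K)).coeff g := by
        intro i g hg
        have h1 := lt_nubarH_iff.1 (lt_of_eq_of_lt (by simp : ((0:ℝ):EReal) = 0) hb) i g hg
        rw [HahnSeries.coeff_sub, sub_eq_zero, hwco i, single_mul_coeff, one_mul,
          coeff_finsetSum] at h1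
        have h2 : g - -c = g + c := by ring
        rw [h2] at h1
        rw [h1]
        apply Finset.sum_congr rfl
        intro j _
        rw [HahnSeries.coeff_smul, smul_eq_mul]
      set r' : Fin n → NovikovSubring K G :=
        r - ∑ j, (⟨HahnSeries.single c (b j), single_mem_nov (b j) hcG⟩ :
          NovikovSubring K G) • u j with hr'def
      have hr'co : ∀ i, ((r' i : HahnSeries ℝ K)) = (r i : HahnSeries ℝ K)
          - ∑ j, HahnSeries.single c (b j) * (u j i : HahnSeries ℝ K) := by
        intro i
        rw [hr'def]
        simp only [Pi.sub_apply, Finset.sum_apply, Pi.smul_apply, smul_eq_mul]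
        push_cast
        rfl
      have hr'coeff : ∀ i g, ((r' i : HahnSeries ℝ K)).coeff g
          = ((r i : HahnSeries ℝ K)).coeff g
            - ∑ j, b j * ((u j i : HahnSeries ℝ K)).coeff (g - c) := by
        intro i g
        rw [hr'co i, HahnSeries.coeff_sub, coeff_finsetSum]
        congr 1
        apply Finset.sum_congr rfl
        intro j _
        rw [single_mul_coeff]
      have hr'V : r' ∈ V := by
        rw [hr'def]
        exact Submodule.sub_mem V hrV
          (Submodule.sum_mem V fun j _ => Submodule.smul_mem V _ (humem j).1)
      have hr'E : ∀ i, ((r' i : HahnSeries ℝ K)).support ⊆ (E : Set ℝ) := by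
        intro i g hg
        rw [HahnSeries.mem_support, hr'coeff] at hg
        by_cases h1 : ((r i : HahnSeries ℝ K)).coeff g = 0
        · have h2 : ∑ j, b j * ((u j i : HahnSeries ℝ K)).coeff (g - c) ≠ 0 := by
            intro h
            rw [h1, h, sub_zero] at hg
            exact hg rfl
          obtain ⟨j, -, hj⟩ := Finset.exists_ne_zero_of_sum_ne_zero h2
          have h3 : ((u j i : HahnSeries ℝ K)).coeff (g - c) ≠ 0 := by
            intro h
            rw [h, mul_zero] at hj
            exact hj rfl
          have h4 : (g - c) ∈ (E : Set ℝ) := hWE (Or.inr (Set.mem_iUnion.2 ⟨j,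
            Set.mem_iUnion.2 ⟨i, h3⟩⟩))
          have := AddSubmonoid.add_mem E hcE h4
          simpa using this
        · exact hrE i h1
      have hvan : ∀ i g, g ≤ c → ((r' i : HahnSeries ℝ K)).coeff g = 0 := by
        intro i g hg
        rw [hr'coeff]
        have := hb' i (g - c) (by linarith)
        have h2 : g - c + c = g := by ring
        rw [h2] at this
        rw [this, sub_self]
      exact ⟨⟨c, b, ⟨r', hr'V, hr'E⟩⟩, hcE, hlb, fun h => absurd h h0,
        fun _ => ⟨i₀, hcmem⟩, hr'co, hvan⟩
  choose step hst using hstep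
  have hvE : ∀ i, ((v i : HahnSeries ℝ K)).support ⊆ (E : Set ℝ) := fun i g hg =>
    hWE (Or.inl (Set.mem_iUnion.2 ⟨i, hg⟩))
  set seq : ℕ → {r : Fin n → NovikovSubring K G //
      r ∈ V ∧ ∀ i, ((r i : HahnSeries ℝ K)).support ⊆ (E : Set ℝ)} :=
    fun m => Nat.rec (motive := fun _ => {r : Fin n → NovikovSubring K G //
      r ∈ V ∧ ∀ i, ((r i : HahnSeries ℝ K)).support ⊆ (E : Set ℝ)})
      ⟨v, hv, hvE⟩ (fun _ s => (step s).2.2) m with hseqdef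
  set c : ℕ → ℝ := fun m => (step (seq m)).1 with hcdef
  set b : ℕ → Fin k → K := fun m => (step (seq m)).2.1 with hbdef
  set r : ℕ → Fin n → NovikovSubring K G := fun m => (seq m).1 with hrdef
  have hr0 : r 0 = v := rfl
  have Hc : ∀ m, c m ∈ E := fun m => (hst (seq m)).1
  have HrV : ∀ m, r m ∈ V := fun m => (seq m).2.1
  have HrE : ∀ m i, ((r m i : HahnSeries ℝ K)).support ⊆ (E : Set ℝ) :=
    fun m => (seq m).2.2
  have Hlb : ∀ m i g, g < c m → ((r m i : HahnSeries ℝ K)).coeff g = 0 :=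
    fun m => (hst (seq m)).2.1
  have Hbz : ∀ m, r m = 0 → b m = 0 := fun m => (hst (seq m)).2.2.1
  have Hmem : ∀ m, r m ≠ 0 → ∃ i, ((r m i : HahnSeries ℝ K)).coeff (c m) ≠ 0 :=
    fun m => (hst (seq m)).2.2.2.1
  have Heq : ∀ m i, ((r (m+1) i : HahnSeries ℝ K)) = (r m i : HahnSeries ℝ K)
      - ∑ j, HahnSeries.single (c m) (b m j) * (u j i : HahnSeries ℝ K) :=
    fun m => (hst (seq m)).2.2.2.2.1
  have Hvan : ∀ m i g, g ≤ c m → ((r (m+1) i : HahnSeries ℝ K)).coeff g = 0 :=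
    fun m => (hst (seq m)).2.2.2.2.2
  have Hzero : ∀ m, r m = 0 → r (m+1) = 0 := by
    intro m hm
    funext i
    apply Subtype.ext
    have h1 : ((r (m+1) i : HahnSeries ℝ K)) = 0 := by
      rw [Heq m i, Hbz m hm, hm]
      simp [HahnSeries.single_eq_zero]
    exact h1
  have Hzero_le : ∀ m m', m ≤ m' → r m = 0 → r m' = 0 := by
    intro m m' hle hm
    induction m' with
    | zero =>
      rw [Nat.le_zero.1 hle] at hm
      exact hm
    | succ m' ih =>
      rcases Nat.lt_or_ge m (m'+1) with h | h
      · exact Hzero m' (ih (Nat.lt_succ_iff.1 h))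
      · rw [Nat.le_antisymm hle h] at hm
        exact hm
  have Hmono : ∀ m, r (m+1) ≠ 0 → c m < c (m+1) := by
    intro m h
    obtain ⟨i, hi⟩ := Hmem (m+1) h
    by_contra hle
    push_neg at hle
    exact hi (Hvan m i _ hle)
  have Hchain : ∀ m m', m < m' → r m' ≠ 0 → c m < c m' := by
    intro m m' h hm'
    induction m' with
    | zero => exact absurd h (Nat.not_lt_zero m)
    | succ m' ih =>
      rcases Nat.lt_or_ge m m' with h1 | h1
      · have h2 : r m' ≠ 0 := fun hz => hm' (Hzero m' hz)
        exact lt_trans (ih h1 h2) (Hmono m' hm')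
      · have : m = m' := Nat.le_antisymm (Nat.lt_succ_iff.1 h) h1
        rw [this]
        exact Hmono m' hm'
  have Hterm : ∀ gC : ℝ, ∃ M, (∀ i, ((r M i : HahnSeries ℝ K)).coeff gC = 0) ∧
      ∀ m, M ≤ m → b m = 0 ∨ gC < c m := by
    intro gC
    by_cases hA : ∃ M₀, r M₀ = 0
    · obtain ⟨M₀, hM₀⟩ := hA
      refine ⟨M₀, fun i => by rw [hM₀]; simp, fun m hm =>
        Or.inl (Hbz m (Hzero_le M₀ m hm hM₀))⟩
    · push_neg at hA
      have hmono' : StrictMono c := fun a a' haa => Hchain a a' haa (hA a')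
      have hMex : ∃ M, gC < c M := by
        by_contra hcon
        push_neg at hcon
        have hinf : ((E : Set ℝ) ∩ Set.Iio (gC+1)).Infinite :=
          Set.infinite_of_injective_forall_mem (f := c) hmono'.injective
            (fun m => ⟨Hc m, lt_of_le_of_lt (hcon m) (lt_add_one _)⟩)
        exact hinf (hEfin (gC+1))
      obtain ⟨M, hM⟩ := hMex
      refine ⟨M, fun i => Hlb M i gC hM, fun m hm => Or.inr ?_⟩
      rcases Nat.eq_or_lt_of_le hm with rfl | h
      · exact hM
      · exact lt_trans hM (Hchain M m h (hA m))
  -- summable families of coefficients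
  have hEWF : Set.IsPWO (E : Set ℝ) := (isWF_of_finite_initial hEfin).isPWO
  have hFam : ∀ j : Fin k, ∃ F : HahnSeries.SummableFamily ℝ K ℕ,
      ∀ m, F m = HahnSeries.single (c m) (b m j) := by
    intro j
    refine ⟨⟨fun m => HahnSeries.single (c m) (b m j), ?_, ?_⟩, fun m => rfl⟩
    · apply Set.IsPWO.mono hEWF
      intro g hg
      rw [Set.mem_iUnion] at hg
      obtain ⟨m, hm⟩ := hg
      rw [Set.mem_singleton_iff.1 (HahnSeries.support_single_subset hm)]
      exact Hc m
    · intro g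
      apply Set.Subsingleton.finite
      intro m hm m' hm'
      simp only [Set.mem_setOf_eq] at hm hm'
      have key : ∀ l : ℕ, (HahnSeries.single (c l) (b l j)).coeff g ≠ 0 →
          c l = g ∧ r l ≠ 0 := by
        intro l hl
        have h1 : g = c l := by
          by_contra hne
          exact hl (HahnSeries.coeff_single_of_ne hne)
        refine ⟨h1.symm, fun hz => ?_⟩
        rw [h1, Hbz l hz] at hl
        simp [HahnSeries.single_eq_zero] at hl
      obtain ⟨hc1, hr1⟩ := key m hm
      obtain ⟨hc2, hr2⟩ := key m' hm'
      rcases lt_trichotomy m m' with h | h | h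
      · exact absurd (hc1.trans hc2.symm) (ne_of_lt (Hchain m m' h hr2))
      · exact h
      · exact absurd (hc2.trans hc1.symm) (ne_of_lt (Hchain m' m h hr1))
  choose F hF using hFam
  have hAcoeff : ∀ j (a : ℝ) (M : ℕ), ({m : ℕ | ((F j) m).coeff a ≠ 0} ⊆ ↑(Finset.range M)) →
      (F j).hsum.coeff a = ∑ m ∈ Finset.range M,
        (HahnSeries.single (c m) (b m j)).coeff a := by
    intro j a M h
    rw [HahnSeries.SummableFamily.coeff_hsum_eq_sum_of_subset h]
    exact Finset.sum_congr rfl fun m _ => by rw [hF j m]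
  have hAtrunc : ∀ j (g a : ℝ) (M : ℕ), (∀ m, M ≤ m → b m = 0 ∨ g < c m) → a ≤ g →
      (F j).hsum.coeff a = ∑ m ∈ Finset.range M,
        (HahnSeries.single (c m) (b m j)).coeff a := by
    intro j g a M hM ha
    apply hAcoeff
    intro m hm
    simp only [Set.mem_setOf_eq, hF j m] at hm
    simp only [Finset.coe_range, Set.mem_Iio]
    by_contra hge
    push_neg at hge
    rcases hM m hge with h | h
    · rw [h] at hm
      simp [HahnSeries.single_eq_zero] at hm
    · have h1 : a = c m := by
        by_contra hne
        exact hm (HahnSeries.coeff_single_of_ne hne)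
      linarith
  have hAsupp : ∀ j, ((F j).hsum.support) ⊆ (E : Set ℝ) := by
    intro j g hg
    rw [HahnSeries.mem_support] at hg
    by_contra hgE
    apply hg
    rw [HahnSeries.SummableFamily.coeff_hsum]
    apply finsum_eq_zero_of_forall_eq_zero
    intro m
    rw [hF j m]
    by_contra h
    have h1 : g = c m := by
      by_contra hne
      exact h (HahnSeries.coeff_single_of_ne hne)
    exact hgE (h1 ▸ Hc m)
  have hANov : ∀ j, (F j).hsum ∈ NovikovSubring K G := fun j =>
    ⟨fun g hg => hEG (hAsupp j hg),
     fun C => ((hEfin C).subset (fun g hg => ⟨hAsupp j hg.1, hg.2⟩))⟩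
  refine ⟨fun j => ⟨(F j).hsum, hANov j⟩, ?_, ?_⟩
  · intro j
    show (0:EReal) ≤ nuH ((F j).hsum)
    refine le_of_eq_of_le (by simp : (0:EReal) = ((0:ℝ):EReal)) (le_nuH_iff.2 ?_)
    intro g hg
    by_contra h
    have h1 := hE0 (hAsupp j h)
    rw [Set.mem_Ici] at h1
    linarith
  · -- the identity v = ∑ j, A j • u j
    have htel : ∀ (M : ℕ) i, ((r M i : HahnSeries ℝ K)) = (v i : HahnSeries ℝ K)
        - ∑ m ∈ Finset.range M, ∑ j,
          HahnSeries.single (c m) (b m j) * (u j i : HahnSeries ℝ K) := by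
      intro M i
      induction M with
      | zero => simp [hr0]
      | succ M ih =>
        rw [Heq M i, ih, Finset.sum_range_succ]
        ring
    funext i
    apply Subtype.ext
    have hRHS : (((∑ j, (⟨(F j).hsum, hANov j⟩ : NovikovSubring K G) • u j) i :
        NovikovSubring K G) : HahnSeries ℝ K) = ∑ j, (F j).hsum * (u j i : HahnSeries ℝ K) := by
      simp only [Finset.sum_apply, Pi.smul_apply, smul_eq_mul]
      push_cast
      rfl
    rw [hRHS]
    ext g
    obtain ⟨M, hM1, hM2⟩ := Hterm g
    have hhead : ∑ j, (∑ m ∈ Finset.range M, HahnSeries.single (c m) (b m j))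
        * (u j i : HahnSeries ℝ K) = (v i : HahnSeries ℝ K) - (r M i : HahnSeries ℝ K) := by
      rw [htel M i]
      simp only [Finset.sum_mul]
      rw [Finset.sum_comm]
      ring
    have htail : ∀ j, (((F j).hsum - ∑ m ∈ Finset.range M,
        HahnSeries.single (c m) (b m j)) * (u j i : HahnSeries ℝ K)).coeff g = 0 := by
      intro j
      apply mul_coeff_zero_of
      · intro a ha
        rw [HahnSeries.coeff_sub, hAtrunc j g a M hM2 ha, coeff_finsetSum, sub_self]
      · exact hu0 j i
    have hsplit : (∑ j, (F j).hsum * (u j i : HahnSeries ℝ K)).coeff g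
        = (∑ j, (∑ m ∈ Finset.range M, HahnSeries.single (c m) (b m j))
            * (u j i : HahnSeries ℝ K)).coeff g := by
      rw [coeff_finsetSum, coeff_finsetSum]
      apply Finset.sum_congr rfl
      intro j _
      have hdecomp : (F j).hsum * (u j i : HahnSeries ℝ K)
          = (∑ m ∈ Finset.range M, HahnSeries.single (c m) (b m j))
              * (u j i : HahnSeries ℝ K)
            + ((F j).hsum - ∑ m ∈ Finset.range M, HahnSeries.single (c m) (b m j))
              * (u j i : HahnSeries ℝ K) := by
        ring
      rw [hdecomp, HahnSeries.coeff_add, htail j, add_zero]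
    rw [hsplit, hhead, HahnSeries.coeff_sub, hM1 i, sub_zero]
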